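/- Let (f₁,…,fₙ) be a regular sequence of homogeneous polynomials in K[x₁,…,xₙ] with deg fᵢ = δᵢ. Then the number of monomials outside the leading-monomial ideal of ⟨f₁,…,fₙ⟩ (i.e., dim_K K[x₁,…,xₙ]/⟨f₁,…,fₙ⟩) equals δ₁δ₂⋯δₙ. -/

import Mathlib

open MvPolynomial

set_option maxHeartbeats 1000000
set_option synthInstance.maxHeartbeats 400000

namespace Stmt12

variable {K : Type*} [Field K] {n : ℕ}


noncomputable def hdim (I : Ideal (MvPolynomial (Fin n) K)) (d : ℕ) : ℕ :=
  Module.finrank K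
    ((homogeneousSubmodule (Fin n) K d).map (Ideal.Quotient.mkₐ K I).toLinearMap)

lemma fd_homog (d : ℕ) : FiniteDimensional K (homogeneousSubmodule (Fin n) K d) := by
  have h : homogeneousSubmodule (Fin n) K d ≤ restrictTotalDegree (Fin n) K d := by
    intro p hp
    rw [mem_restrictTotalDegree]
    exact (hp : p.IsHomogeneous d).totalDegree_le
  exact Submodule.finiteDimensional_of_le h

lemma fd_A (I : Ideal (MvPolynomial (Fin n) K)) (d : ℕ) :
    FiniteDimensional K
      ((homogeneousSubmodule (Fin n) K d).map (Ideal.Quotient.mkₐ K I).toLinearMap) := by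
  have := fd_homog (K := K) (n := n) d
  exact Module.Finite.map _ _

lemma component_mem_span {S : Set (MvPolynomial (Fin n) K)}
    (hS : ∀ p ∈ S, ∃ m, p.IsHomogeneous m) {p : MvPolynomial (Fin n) K}
    (hp : p ∈ Ideal.span S) (d : ℕ) : homogeneousComponent d p ∈ Ideal.span S := by
  letI : GradedAlgebra (homogeneousSubmodule (Fin n) K) := MvPolynomial.gradedAlgebra
  have hhom : Ideal.IsHomogeneous (homogeneousSubmodule (Fin n) K) (Ideal.span S) := by
    apply Ideal.homogeneous_span
    intro x hx
    obtain ⟨m, hm⟩ := hS x hx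
    exact ⟨m, hm⟩
  have h2 := hhom d hp
  have : ((DirectSum.decompose (homogeneousSubmodule (Fin n) K) p d : _) : MvPolynomial (Fin n) K)
      = homogeneousComponent d p := decomposition.decompose'_apply p d
  rwa [this] at h2

lemma comp_mul (c f0 : MvPolynomial (Fin n) K) {δ : ℕ} (hf0 : f0.IsHomogeneous δ) (d : ℕ) :
    homogeneousComponent d (c * f0)
      = if δ ≤ d then homogeneousComponent (d - δ) c * f0 else 0 := by
  conv_lhs => rw [← sum_homogeneousComponent c, Finset.sum_mul, map_sum]
  have hterm : ∀ e, homogeneousComponent d (homogeneousComponent e c * f0)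
      = if d = e + δ then homogeneousComponent e c * f0 else 0 := by
    intro e
    have hmem : homogeneousComponent e c * f0 ∈ homogeneousSubmodule (Fin n) K (e + δ) :=
      (homogeneousComponent_isHomogeneous e c).mul hf0
    exact homogeneousComponent_of_mem hmem
  simp_rw [hterm]
  by_cases hδ : δ ≤ d
  · rw [if_pos hδ, Finset.sum_eq_single (d - δ)]
    · rw [if_pos (by omega)]
    · intro e _ he
      rw [if_neg (by omega)]
    · intro hnot
      rw [if_pos (by omega), homogeneousComponent_eq_zero]
      · ring
      · simp only [Finset.mem_range] at hnot; omega
  · rw [if_neg hδ]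
    exact Finset.sum_eq_zero fun e _ => by rw [if_neg (by omega)]

lemma step {S : Set (MvPolynomial (Fin n) K)}
    (hS : ∀ p ∈ S, ∃ m, p.IsHomogeneous m)
    {f0 : MvPolynomial (Fin n) K} {δ : ℕ} (hf0 : f0.IsHomogeneous δ)
    (hrg : ∀ g, g * f0 ∈ Ideal.span S → g ∈ Ideal.span S) (d : ℕ) :
    hdim (Ideal.span (insert f0 S)) d
      + (if δ ≤ d then hdim (Ideal.span S) (d - δ) else 0)
      = hdim (Ideal.span S) d := by
  set I : Ideal (MvPolynomial (Fin n) K) := Ideal.span S with hI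
  set J : Ideal (MvPolynomial (Fin n) K) := Ideal.span (insert f0 S) with hJ
  have hIJ : I ≤ J := Ideal.span_mono (Set.subset_insert _ _)
  have hf0J : f0 ∈ J := Ideal.subset_span (Set.mem_insert _ _)
  -- the K-algebra factor map
  let π : (MvPolynomial (Fin n) K ⧸ I) →ₐ[K] (MvPolynomial (Fin n) K ⧸ J) :=
    Ideal.Quotient.liftₐ I (Ideal.Quotient.mkₐ K J) (fun a ha => by
      rw [Ideal.Quotient.mkₐ_eq_mk, Ideal.Quotient.eq_zero_iff_mem]
      exact hIJ ha)
  have hπmk : ∀ a : MvPolynomial (Fin n) K,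
      π (Ideal.Quotient.mkₐ K I a) = Ideal.Quotient.mkₐ K J a := fun a => rfl
  set AI : ℕ → Submodule K (MvPolynomial (Fin n) K ⧸ I) :=
    fun e => (homogeneousSubmodule (Fin n) K e).map (Ideal.Quotient.mkₐ K I).toLinearMap with hAI
  haveI : FiniteDimensional K (AI d) := fd_A I d
  let T : AI d →ₗ[K] (MvPolynomial (Fin n) K ⧸ J) := π.toLinearMap ∘ₗ (AI d).subtype
  have hrange : LinearMap.range T
      = (homogeneousSubmodule (Fin n) K d).map (Ideal.Quotient.mkₐ K J).toLinearMap := by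
    rw [LinearMap.range_comp, Submodule.range_subtype, hAI]
    rw [← Submodule.map_comp]
    congr 1
  -- multiplication by f0 map
  let μ : (MvPolynomial (Fin n) K ⧸ I) →ₗ[K] (MvPolynomial (Fin n) K ⧸ I) :=
    LinearMap.mulLeft K (Ideal.Quotient.mkₐ K I f0)
  have hμinj : Function.Injective μ := by
    rw [← LinearMap.ker_eq_bot, eq_bot_iff]
    intro x hx
    obtain ⟨g, rfl⟩ := Ideal.Quotient.mk_surjective x
    have hx' : Ideal.Quotient.mk I f0 * Ideal.Quotient.mk I g = 0 := hx
    rw [← map_mul, Ideal.Quotient.eq_zero_iff_mem] at hx'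
    have hgf : g * f0 ∈ I := by rwa [mul_comm]
    rw [Submodule.mem_bot, Ideal.Quotient.eq_zero_iff_mem]
    exact hrg g hgf
  have hkey := LinearMap.finrank_range_add_finrank_ker T
  by_cases hδ : δ ≤ d
  · -- N = image of degree (d-δ) part multiplied by f0
    set N : Submodule K (MvPolynomial (Fin n) K ⧸ I) := (AI (d - δ)).map μ with hN
    have hNle : N ≤ AI d := by
      rintro x hx
      obtain ⟨y, hy, rfl⟩ := hx
      obtain ⟨g, hg, rfl⟩ := hy
      refine ⟨f0 * g, ?_, ?_⟩
      · have : (f0 * g).IsHomogeneous (δ + (d - δ)) := hf0.mul hg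
        rwa [Nat.add_sub_cancel' hδ] at this
      · simp [μ, LinearMap.mulLeft_apply, map_mul]
    have hker : LinearMap.ker T = Submodule.comap (AI d).subtype N := by
      ext ⟨x, hx⟩
      simp only [LinearMap.mem_ker, Submodule.mem_comap, Submodule.subtype_apply]
      constructor
      · intro hT
        obtain ⟨g, hg, rfl⟩ := hx
        have hgJ : g ∈ J := by
          have : Ideal.Quotient.mkₐ K J g = 0 := by
            rw [← hπmk]; simpa [T] using hT
          rwa [Ideal.Quotient.mkₐ_eq_mk, Ideal.Quotient.eq_zero_iff_mem] at this
        rw [hJ, Ideal.span_insert] at hgJ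
        obtain ⟨y, hy, z, hz, hyz⟩ := Submodule.mem_sup.mp hgJ
        obtain ⟨c, rfl⟩ := Ideal.mem_span_singleton'.mp hy
        -- take degree d components
        have hgc : g = homogeneousComponent (d - δ) c * f0 + homogeneousComponent d z := by
          have h1 : homogeneousComponent d g = g := by
            rw [homogeneousComponent_of_mem hg, if_pos rfl]
          conv_lhs => rw [← h1, ← hyz]
          rw [map_add, comp_mul c f0 hf0 d, if_pos hδ]
        have hzI : homogeneousComponent d z ∈ I := component_mem_span hS hz d
        refine ⟨Ideal.Quotient.mkₐ K I (homogeneousComponent (d - δ) c),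
          ⟨homogeneousComponent (d - δ) c, homogeneousComponent_mem _ _, rfl⟩, ?_⟩
        have : (Ideal.Quotient.mk I) g
            = (Ideal.Quotient.mk I) (f0 * homogeneousComponent (d - δ) c) := by
          rw [Ideal.Quotient.mk_eq_mk_iff_sub_mem]
          have : g - f0 * homogeneousComponent (d - δ) c = homogeneousComponent d z := by
            rw [hgc]; ring
          rwa [this]
        simpa [μ, LinearMap.mulLeft_apply, map_mul] using this.symm
      · rintro ⟨y, hy, hyx⟩
        obtain ⟨g, hg, rfl⟩ := hy
        have : x = Ideal.Quotient.mkₐ K I (f0 * g) := by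
          rw [← hyx]; simp [μ, LinearMap.mulLeft_apply, map_mul]
        have : T ⟨x, hx⟩ = Ideal.Quotient.mkₐ K J (f0 * g) := by
          simp only [T, LinearMap.comp_apply, Submodule.subtype_apply, this]
          exact hπmk _
        rw [this, Ideal.Quotient.mkₐ_eq_mk, Ideal.Quotient.eq_zero_iff_mem]
        exact Ideal.mul_mem_right _ _ hf0J
    -- finrank of kernel equals hdim I (d - δ)
    haveI : FiniteDimensional K (AI (d - δ)) := fd_A I (d - δ)
    have hkerrank : Module.finrank K (LinearMap.ker T) = hdim I (d - δ) := by
      rw [hker]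
      rw [(Submodule.comapSubtypeEquivOfLe hNle).finrank_eq]
      rw [hN]
      rw [(Submodule.equivMapOfInjective μ hμinj (AI (d - δ))).finrank_eq.symm]
      rfl
    rw [if_pos hδ]
    have hrangerank : Module.finrank K (LinearMap.range T) = hdim J d := by
      rw [hrange]; rfl
    rw [← hrangerank, ← hkerrank]
    rw [hkey]
    rfl
  · rw [if_neg hδ]
    have hker : LinearMap.ker T = ⊥ := by
      rw [eq_bot_iff]
      rintro ⟨x, hx⟩ hT
      obtain ⟨g, hg, rfl⟩ := hx
      simp only [LinearMap.mem_ker] at hT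
      have hgJ : g ∈ J := by
        have : Ideal.Quotient.mkₐ K J g = 0 := by
          rw [← hπmk]; simpa [T] using hT
        rwa [Ideal.Quotient.mkₐ_eq_mk, Ideal.Quotient.eq_zero_iff_mem] at this
      rw [hJ, Ideal.span_insert] at hgJ
      obtain ⟨y, hy, z, hz, hyz⟩ := Submodule.mem_sup.mp hgJ
      obtain ⟨c, rfl⟩ := Ideal.mem_span_singleton'.mp hy
      have hgI : g ∈ I := by
        have h1 : homogeneousComponent d g = g := by
          rw [homogeneousComponent_of_mem hg, if_pos rfl]
        have : g = homogeneousComponent d z := by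
          conv_lhs => rw [← h1, ← hyz]
          rw [map_add, comp_mul c f0 hf0 d, if_neg hδ, zero_add]
        rw [this]
        exact component_mem_span hS hz d
      have : (Ideal.Quotient.mkₐ K I) g = 0 := by
        rw [Ideal.Quotient.mkₐ_eq_mk, Ideal.Quotient.eq_zero_iff_mem]; exact hgI
      rw [Submodule.mem_bot]
      exact Subtype.ext this
    have hrangerank : Module.finrank K (LinearMap.range T) = hdim J d := by
      rw [hrange]; rfl
    rw [← hrangerank, add_zero]
    rw [hker] at hkey
    simp at hkey; exact hkey



/-- the substitution killing the variables `x_j`, `j < k` -/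
noncomputable def killLT (K : Type*) [Field K] (n k : ℕ) :
    MvPolynomial (Fin n) K →ₐ[K] MvPolynomial (Fin n) K :=
  aeval (fun j : Fin n => if (j : ℕ) < k then 0 else X j)

lemma killLT_X_lt {k : ℕ} {j : Fin n} (h : (j : ℕ) < k) : killLT K n k (X j) = 0 := by
  rw [killLT, aeval_X, if_pos h]

lemma killLT_X_ge {k : ℕ} {j : Fin n} (h : ¬ (j : ℕ) < k) : killLT K n k (X j) = X j := by
  rw [killLT, aeval_X, if_neg h]

lemma span_le_ker_killLT (k : ℕ) :
    Ideal.span ((fun j : Fin n => (X j : MvPolynomial (Fin n) K)) '' {j | (j : ℕ) < k})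
      ≤ RingHom.ker (killLT K n k) := by
  rw [Ideal.span_le]
  rintro x ⟨j, hj, rfl⟩
  simp only [SetLike.mem_coe, RingHom.mem_ker]
  exact killLT_X_lt hj

lemma sub_killLT_mem (k : ℕ) (p : MvPolynomial (Fin n) K) :
    p - killLT K n k p ∈
      Ideal.span ((fun j : Fin n => (X j : MvPolynomial (Fin n) K)) '' {j | (j : ℕ) < k}) := by
  set T := Ideal.span ((fun j : Fin n => (X j : MvPolynomial (Fin n) K)) '' {j | (j : ℕ) < k})
  induction p using MvPolynomial.induction_on with
  | C a => rw [killLT, aeval_C]; simp only [algebraMap_eq, sub_self]; exact T.zero_mem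
  | add p q hp hq =>
      rw [map_add]
      have : p + q - (killLT K n k p + killLT K n k q)
          = (p - killLT K n k p) + (q - killLT K n k q) := by ring
      rw [this]; exact T.add_mem hp hq
  | mul_X p j hp =>
      rw [map_mul]
      by_cases hj : (j : ℕ) < k
      · rw [killLT_X_lt hj, mul_zero, sub_zero]
        have hXj : (X j : MvPolynomial (Fin n) K) ∈ T :=
          Ideal.subset_span ⟨j, hj, rfl⟩
        exact Ideal.mul_mem_left _ _ hXj
      · rw [killLT_X_ge hj]
        have : p * X j - killLT K n k p * X j = (p - killLT K n k p) * X j := by ring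
        rw [this]
        exact Ideal.mul_mem_right _ _ hp

lemma reg_X_seq (k : ℕ) {j0 : Fin n} (hj0 : ¬ (j0 : ℕ) < k)
    (g : MvPolynomial (Fin n) K)
    (hg : g * X j0 ∈
      Ideal.span ((fun j : Fin n => (X j : MvPolynomial (Fin n) K)) '' {j | (j : ℕ) < k})) :
    g ∈ Ideal.span ((fun j : Fin n => (X j : MvPolynomial (Fin n) K)) '' {j | (j : ℕ) < k}) := by
  have h0 : killLT K n k (g * X j0) = 0 := span_le_ker_killLT k hg
  rw [map_mul, killLT_X_ge hj0] at h0
  have hg0 : killLT K n k g = 0 := by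
    rcases mul_eq_zero.mp h0 with h | h
    · exact h
    · exact absurd h (X_ne_zero j0)
  have := sub_killLT_mem (K := K) (n := n) k g
  rwa [hg0, sub_zero] at this

lemma iSup_homog_eq_top :
    (⨆ d : ℕ, homogeneousSubmodule (Fin n) K d) = ⊤ := by
  rw [eq_top_iff]
  intro p _
  rw [← sum_homogeneousComponent p]
  exact Submodule.sum_mem _ fun i _ =>
    Submodule.mem_iSup_of_mem i (homogeneousComponent_mem i p)

lemma finrank_quotient_eq_sum {S : Set (MvPolynomial (Fin n) K)}
    (hS : ∀ p ∈ S, ∃ m, p.IsHomogeneous m) (D : ℕ)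
    (hvan : ∀ d, D < d → hdim (Ideal.span S) d = 0) :
    Module.finrank K (MvPolynomial (Fin n) K ⧸ Ideal.span S)
      = ∑ d ∈ Finset.range (D + 1), hdim (Ideal.span S) d := by
  classical
  set J : Ideal (MvPolynomial (Fin n) K) := Ideal.span S with hJ
  set A : ℕ → Submodule K (MvPolynomial (Fin n) K ⧸ J) :=
    fun d => (homogeneousSubmodule (Fin n) K d).map (Ideal.Quotient.mkₐ K J).toLinearMap with hA
  haveI : ∀ d : ℕ, FiniteDimensional K (A d) := fun d => fd_A J d
  haveI : ∀ d : Fin (D + 1), FiniteDimensional K (A (d : ℕ)) := fun d => fd_A J _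
  let Φ : ((d : Fin (D + 1)) → A (d : ℕ)) →ₗ[K] (MvPolynomial (Fin n) K ⧸ J) :=
    LinearMap.lsum K (fun d : Fin (D + 1) => A (d : ℕ)) K (fun d => (A (d : ℕ)).subtype)
  have hΦ : ∀ v, Φ v = ∑ d : Fin (D + 1), ((v d : MvPolynomial (Fin n) K ⧸ J)) := by
    intro v
    simp [Φ, LinearMap.lsum_apply]
  have hinj : Function.Injective Φ := by
    rw [← LinearMap.ker_eq_bot, eq_bot_iff]
    intro v hv
    simp only [LinearMap.mem_ker, hΦ] at hv
    have hgs := fun d : Fin (D + 1) => (v d).2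
    choose g hg hgv using hgs
    have hsum : (∑ d : Fin (D + 1), g d) ∈ J := by
      rw [← Ideal.Quotient.eq_zero_iff_mem]
      have : Ideal.Quotient.mk J (∑ d : Fin (D + 1), g d)
          = ∑ d : Fin (D + 1), (v d : MvPolynomial (Fin n) K ⧸ J) := by
        rw [map_sum]
        exact Finset.sum_congr rfl fun d _ => hgv d
      rw [this, hv]
    have hcomp : ∀ d0 : Fin (D + 1), g d0 ∈ J := by
      intro d0
      have h1 := component_mem_span hS hsum (d0 : ℕ)
      have h2 : homogeneousComponent (d0 : ℕ) (∑ d : Fin (D + 1), g d) = g d0 := by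
        rw [map_sum]
        rw [Finset.sum_eq_single d0]
        · rw [homogeneousComponent_of_mem (hg d0), if_pos rfl]
        · intro d _ hd
          rw [homogeneousComponent_of_mem (hg d),
            if_neg (by simpa [Fin.val_inj] using hd ∘ Eq.symm ∘ Fin.val_inj.mp)]
        · intro h; exact absurd (Finset.mem_univ d0) h
      rwa [h2] at h1
    rw [Submodule.mem_bot]
    funext d0
    apply Subtype.ext
    have : (v d0 : MvPolynomial (Fin n) K ⧸ J) = 0 := by
      rw [← hgv d0]
      exact Ideal.Quotient.eq_zero_iff_mem.mpr (hcomp d0)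
    simpa using this
  have hsurj : Function.Surjective Φ := by
    rw [← LinearMap.range_eq_top, eq_top_iff]
    have htop : (⊤ : Submodule K (MvPolynomial (Fin n) K ⧸ J)) = ⨆ d : ℕ, A d := by
      have h1 : Submodule.map (Ideal.Quotient.mkₐ K J).toLinearMap ⊤ = ⊤ := by
        rw [Submodule.map_top]
        exact LinearMap.range_eq_top.mpr (Ideal.Quotient.mkₐ_surjective K J)
      rw [← h1, ← iSup_homog_eq_top, Submodule.map_iSup]
    rw [htop]
    apply iSup_le
    intro d
    by_cases hd : d ≤ D
    · intro x hx
      have hx' : x ∈ A d := hx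
      refine ⟨Pi.single (⟨d, by omega⟩ : Fin (D + 1)) ⟨x, hx'⟩, ?_⟩
      rw [hΦ]
      rw [Finset.sum_eq_single (⟨d, by omega⟩ : Fin (D + 1))]
      · rw [Pi.single_eq_same]
      · intro b _ hb
        rw [Pi.single_eq_of_ne hb]
        rfl
      · intro h; exact absurd (Finset.mem_univ _) h
    · have : A d = ⊥ := by
        have h0 : hdim J d = 0 := hvan d (by omega)
        exact Submodule.finrank_eq_zero.mp h0
      rw [this]
      exact bot_le
  have e : ((d : Fin (D + 1)) → A (d : ℕ)) ≃ₗ[K] (MvPolynomial (Fin n) K ⧸ J) :=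
    LinearEquiv.ofBijective Φ ⟨hinj, hsurj⟩
  rw [← e.finrank_eq, Module.finrank_pi_fintype]
  exact Fin.sum_univ_eq_sum_range (fun d => hdim J d) (D + 1)


lemma coeff_X_pow_mul' (F : PowerSeries ℤ) (a d : ℕ) :
    PowerSeries.coeff d (PowerSeries.X ^ a * F)
      = if a ≤ d then PowerSeries.coeff (d - a) F else 0 := by
  by_cases h : a ≤ d
  · rw [if_pos h]
    conv_lhs => rw [show d = (d - a) + a from by omega]
    exact PowerSeries.coeff_X_pow_mul F a (d - a)
  · rw [if_neg h, PowerSeries.coeff_mul]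
    apply Finset.sum_eq_zero
    rintro ⟨p1, p2⟩ hp
    have hmem : p1 + p2 = d := Finset.HasAntidiagonal.mem_antidiagonal.mp hp
    rw [PowerSeries.coeff_X_pow, if_neg (by omega)]
    exact zero_mul _

/-- the ideal generated by the first `k` entries of the sequence -/
noncomputable def Ik (f : Fin n → MvPolynomial (Fin n) K) (k : ℕ) : Ideal (MvPolynomial (Fin n) K) :=
  Ideal.span (f '' {j : Fin n | (j : ℕ) < k})

lemma Ik_zero (f : Fin n → MvPolynomial (Fin n) K) : Ik f 0 = Ideal.span ∅ := by
  unfold Ik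
  have h : {j : Fin n | (j : ℕ) < 0} = ∅ := by ext j; simp
  rw [h, Set.image_empty]

lemma Ik_succ (f : Fin n → MvPolynomial (Fin n) K) {k : ℕ} (hk : k < n) :
    Ik f (k + 1) = Ideal.span (insert (f ⟨k, hk⟩) (f '' {j : Fin n | (j : ℕ) < k})) := by
  unfold Ik
  congr 1
  have h : {j : Fin n | (j : ℕ) < k + 1}
      = insert (⟨k, hk⟩ : Fin n) {j : Fin n | (j : ℕ) < k} := by
    ext j
    simp only [Set.mem_setOf_eq, Set.mem_insert_iff, Fin.ext_iff]
    omega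
  rw [h, Set.image_insert_eq]

lemma series_eq (f : Fin n → MvPolynomial (Fin n) K) (δf : Fin n → ℕ)
    (hf : ∀ i, (f i).IsHomogeneous (δf i))
    (hreg' : ∀ (k : ℕ) (hk : k < n), ∀ g, g * f ⟨k, hk⟩ ∈ Ik f k → g ∈ Ik f k)
    (dd : ℕ → ℕ) (hdd : ∀ (k : ℕ) (hk : k < n), dd k = δf ⟨k, hk⟩) :
    ∀ k, k ≤ n →
      PowerSeries.mk (fun d => (hdim (Ik f k) d : ℤ))
        = (∏ i ∈ Finset.range k, (1 - PowerSeries.X ^ dd i))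
          * PowerSeries.mk (fun d => (hdim (Ik f 0) d : ℤ)) := by
  intro k
  induction k with
  | zero => intro _; simp
  | succ k ih =>
    intro hk1
    have hk : k < n := by omega
    have hstep : ∀ d : ℕ, hdim (Ik f (k + 1)) d
        + (if δf ⟨k, hk⟩ ≤ d then hdim (Ik f k) (d - δf ⟨k, hk⟩) else 0)
        = hdim (Ik f k) d := by
      intro d
      rw [Ik_succ f hk]
      exact step (fun p hp => by obtain ⟨j, _, rfl⟩ := hp; exact ⟨δf j, hf j⟩)
        (hf ⟨k, hk⟩) (hreg' k hk) d
    have hps : PowerSeries.mk (fun d => (hdim (Ik f (k + 1)) d : ℤ))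
        = (1 - PowerSeries.X ^ dd k)
          * PowerSeries.mk (fun d => (hdim (Ik f k) d : ℤ)) := by
      apply PowerSeries.ext
      intro d
      rw [sub_mul, one_mul, map_sub, coeff_X_pow_mul', PowerSeries.coeff_mk,
        PowerSeries.coeff_mk, hdd k hk]
      have hs := hstep d
      split_ifs with h
      · rw [if_pos h] at hs
        rw [PowerSeries.coeff_mk]
        push_cast [← hs]
        ring
      · rw [if_neg h, add_zero] at hs
        rw [hs, sub_zero]
    rw [hps, ih (by omega), Finset.prod_range_succ]
    ring

lemma one_notin_M :
    (1 : MvPolynomial (Fin n) K) ∉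
      Ideal.span ((fun j : Fin n => (X j : MvPolynomial (Fin n) K)) '' {j | (j : ℕ) < n}) := by
  intro h
  have h0 : killLT K n n (1 : MvPolynomial (Fin n) K) = 0 := span_le_ker_killLT n h
  rw [map_one] at h0
  exact one_ne_zero h0

lemma hdim_Xseq (d : ℕ) :
    hdim (Ik (fun j : Fin n => (X j : MvPolynomial (Fin n) K)) n) d
      = if d = 0 then 1 else 0 := by
  set M : Ideal (MvPolynomial (Fin n) K) :=
    Ik (fun j : Fin n => (X j : MvPolynomial (Fin n) K)) n with hM
  rcases Nat.eq_zero_or_pos d with rfl | hd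
  · rw [if_pos rfl]
    have heq : (homogeneousSubmodule (Fin n) K 0).map (Ideal.Quotient.mkₐ K M).toLinearMap
        = Submodule.span K {(Ideal.Quotient.mkₐ K M) 1} := by
      apply le_antisymm
      · rintro x ⟨p, hp, rfl⟩
        have hp1 : homogeneousComponent 0 p = p := by
          rw [homogeneousComponent_of_mem hp, if_pos rfl]
        have hp' : p = C (coeff 0 p) := by
          conv_lhs => rw [← hp1, homogeneousComponent_zero]
        rw [Submodule.mem_span_singleton]
        refine ⟨coeff 0 p, ?_⟩
        show (coeff 0 p) • (Ideal.Quotient.mkₐ K M) 1 = (Ideal.Quotient.mkₐ K M) p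
        rw [← map_smul, smul_eq_C_mul, mul_one, ← hp']
      · rw [Submodule.span_le, Set.singleton_subset_iff]
        exact ⟨1, isHomogeneous_one (Fin n) K, rfl⟩
    rw [hdim, heq]
    apply finrank_span_singleton
    intro h
    exact one_notin_M (Ideal.Quotient.eq_zero_iff_mem.mp h)
  · rw [if_neg (by omega)]
    have heq : (homogeneousSubmodule (Fin n) K d).map (Ideal.Quotient.mkₐ K M).toLinearMap
        = ⊥ := by
      rw [eq_bot_iff]
      rintro x ⟨p, hp, rfl⟩
      have hkill : killLT K n n p = 0 := by
        have hfun : (fun j : Fin n => if (j : ℕ) < n then (0 : MvPolynomial (Fin n) K)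
            else X j) = fun _ => 0 := funext fun j => if_pos j.isLt
        rw [killLT, hfun]
        rw [show (aeval (fun _ : Fin n => (0 : MvPolynomial (Fin n) K))) p
          = algebraMap _ _ (constantCoeff p) from aeval_zero' p]
        have hc : constantCoeff p = 0 := by
          rw [constantCoeff_eq]
          exact (hp : p.IsHomogeneous d).coeff_eq_zero (by
            simp only [map_zero]
            omega)
        rw [hc, map_zero]
      have hpM : p ∈ M := by
        have hsub := sub_killLT_mem (K := K) (n := n) n p
        rwa [hkill, sub_zero] at hsub
      rw [Submodule.mem_bot]
      exact Ideal.Quotient.eq_zero_iff_mem.mpr hpM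
    rw [hdim, heq]
    exact finrank_bot K _

end Stmt12

open Stmt12

/-- for a regular sequence `(f₁,…,fₙ)` of nonzero homogeneous polynomials in
`K[x₁,…,xₙ]` with `deg fᵢ = δᵢ`, the dimension of `K[x₁,…,xₙ]/⟨f₁,…,fₙ⟩` as a `K`-vector
space equals `δ₁δ₂⋯δₙ`. -/
theorem stmt_12 {K : Type*} [Field K] {n : ℕ}
    (f : Fin n → MvPolynomial (Fin n) K) (δ : Fin n → ℕ)
    (hf0 : ∀ i, f i ≠ 0) (hf : ∀ i, (f i).IsHomogeneous (δ i))
    (hreg : ∀ i : Fin n, ∀ g : MvPolynomial (Fin n) K,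
      g * f i ∈ Ideal.span {p | ∃ j : Fin n, j < i ∧ p = f j} →
      g ∈ Ideal.span {p | ∃ j : Fin n, j < i ∧ p = f j}) :
    Module.finrank K (MvPolynomial (Fin n) K ⧸ Ideal.span (Set.range f))
      = ∏ i, δ i := by
  classical
  have hreg' : ∀ (k : ℕ) (hk : k < n), ∀ g, g * f ⟨k, hk⟩ ∈ Ik f k → g ∈ Ik f k := by
    intro k hk g hg
    have hset : {p | ∃ j : Fin n, j < ⟨k, hk⟩ ∧ p = f j}
        = f '' {j : Fin n | (j : ℕ) < k} := by
      ext p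
      constructor
      · rintro ⟨j, hj, rfl⟩
        exact ⟨j, by simpa [Fin.lt_def] using hj, rfl⟩
      · rintro ⟨j, hj, rfl⟩
        exact ⟨j, by simpa [Fin.lt_def] using hj, rfl⟩
    unfold Ik at hg ⊢
    rw [← hset] at hg ⊢
    exact hreg ⟨k, hk⟩ g hg
  have hregX : ∀ (k : ℕ) (hk : k < n), ∀ g,
      g * (fun j : Fin n => (X j : MvPolynomial (Fin n) K)) ⟨k, hk⟩
        ∈ Ik (fun j : Fin n => (X j : MvPolynomial (Fin n) K)) k →
      g ∈ Ik (fun j : Fin n => (X j : MvPolynomial (Fin n) K)) k := by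
    intro k hk g hg
    exact reg_X_seq k (by simp) g hg
  set dd : ℕ → ℕ := fun m => if h : m < n then δ ⟨m, h⟩ else 0 with hdd0
  have hdd : ∀ (k : ℕ) (hk : k < n), dd k = δ ⟨k, hk⟩ := fun k hk => dif_pos hk
  have hFn := series_eq f δ hf hreg' dd hdd n le_rfl
  have hGn := series_eq (fun j : Fin n => (X j : MvPolynomial (Fin n) K)) (fun _ => 1)
    (fun i => isHomogeneous_X _ _) hregX (fun _ => 1) (fun _ _ => rfl) n le_rfl
  have hG1 : PowerSeries.mk
      (fun d => (hdim (Ik (fun j : Fin n => (X j : MvPolynomial (Fin n) K)) n) d : ℤ))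
        = 1 := by
    apply PowerSeries.ext
    intro d
    rw [PowerSeries.coeff_mk, PowerSeries.coeff_one, hdim_Xseq]
    split_ifs <;> simp
  have hF0G0 : Ik f 0 = Ik (fun j : Fin n => (X j : MvPolynomial (Fin n) K)) 0 := by
    rw [Ik_zero, Ik_zero]
  have hpowprod : ((1 - PowerSeries.X) ^ n : PowerSeries ℤ)
      = ∏ _i ∈ Finset.range n, (1 - PowerSeries.X) := by
    rw [Finset.prod_const, Finset.card_range]
  have hbase : ((1 - PowerSeries.X) ^ n)
      * PowerSeries.mk (fun d => (hdim (Ik f 0) d : ℤ)) = 1 := by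
    rw [hF0G0]
    have h2 : (∏ i ∈ Finset.range n, (1 - (PowerSeries.X : PowerSeries ℤ) ^ (1 : ℕ)))
        = (1 - PowerSeries.X) ^ n := by
      rw [hpowprod]
      exact Finset.prod_congr rfl fun i _ => by rw [pow_one]
    rw [← h2, ← hGn, hG1]
  set Pz : Polynomial ℤ :=
    ∏ i ∈ Finset.range n, (∑ j ∈ Finset.range (dd i), Polynomial.X ^ j) with hPz
  have hPcoe : ((Pz : Polynomial ℤ) : PowerSeries ℤ)
      = ∏ i ∈ Finset.range n,
          (∑ j ∈ Finset.range (dd i), (PowerSeries.X : PowerSeries ℤ) ^ j) := by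
    rw [← Polynomial.coeToPowerSeries.ringHom_apply, hPz, map_prod]
    refine Finset.prod_congr rfl fun i _ => ?_
    rw [map_sum]
    refine Finset.sum_congr rfl fun j _ => ?_
    rw [map_pow, Polynomial.coeToPowerSeries.ringHom_apply, Polynomial.coe_X]
  have hfactor : ∀ a : ℕ,
      (∑ j ∈ Finset.range a, (PowerSeries.X : PowerSeries ℤ) ^ j) * (1 - PowerSeries.X)
        = 1 - PowerSeries.X ^ a := by
    intro a
    have h := geom_sum_mul (PowerSeries.X : PowerSeries ℤ) a
    linear_combination -h
  have hprod : (∏ i ∈ Finset.range n, (1 - (PowerSeries.X : PowerSeries ℤ) ^ dd i))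
      = ((Pz : Polynomial ℤ) : PowerSeries ℤ) * (1 - PowerSeries.X) ^ n := by
    rw [hPcoe, hpowprod, ← Finset.prod_mul_distrib]
    exact Finset.prod_congr rfl fun i _ => (hfactor (dd i)).symm
  have hFnP : PowerSeries.mk (fun d => (hdim (Ik f n) d : ℤ))
      = ((Pz : Polynomial ℤ) : PowerSeries ℤ) := by
    rw [hFn, hprod, mul_assoc, hbase, mul_one]
  have hcoeff : ∀ d, (hdim (Ik f n) d : ℤ) = Pz.coeff d := by
    intro d
    have h := congrArg (PowerSeries.coeff d) hFnP
    rwa [PowerSeries.coeff_mk, Polynomial.coeff_coe] at h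
  have hspan : Ideal.span (Set.range f) = Ik f n := by
    unfold Ik
    congr 1
    have h : {j : Fin n | (j : ℕ) < n} = Set.univ := by
      ext j; simpa using j.isLt
    rw [h, Set.image_univ]
  have hvan : ∀ d, Pz.natDegree < d → hdim (Ik f n) d = 0 := by
    intro d hd
    have h0 : Pz.coeff d = 0 := Polynomial.coeff_eq_zero_of_natDegree_lt hd
    have h1 := hcoeff d
    rw [h0] at h1
    exact_mod_cast h1
  have hcount : Module.finrank K (MvPolynomial (Fin n) K ⧸ Ik f n)
      = ∑ d ∈ Finset.range (Pz.natDegree + 1), hdim (Ik f n) d :=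
    finrank_quotient_eq_sum (fun p hp => by obtain ⟨j, _, rfl⟩ := hp; exact ⟨δ j, hf j⟩)
      Pz.natDegree hvan
  rw [hspan, hcount]
  have hsum : ((∑ d ∈ Finset.range (Pz.natDegree + 1), hdim (Ik f n) d : ℕ) : ℤ)
      = Pz.eval 1 := by
    push_cast
    rw [Polynomial.eval_eq_sum_range]
    refine Finset.sum_congr rfl fun d _ => ?_
    rw [one_pow, mul_one]
    exact hcoeff d
  have hval : Pz.eval 1 = ∏ i ∈ Finset.range n, (dd i : ℤ) := by
    rw [hPz, Polynomial.eval_prod]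
    refine Finset.prod_congr rfl fun i _ => ?_
    rw [Polynomial.eval_finset_sum]
    simp
  have hfin : ((∏ i : Fin n, δ i : ℕ) : ℤ) = ∏ i ∈ Finset.range n, (dd i : ℤ) := by
    rw [← Fin.prod_univ_eq_prod_range (fun m => (dd m : ℤ)) n]
    push_cast
    refine Finset.prod_congr rfl fun i _ => ?_
    rw [hdd i.val i.isLt, Fin.eta]
  have hfinal : ((∑ d ∈ Finset.range (Pz.natDegree + 1), hdim (Ik f n) d : ℕ) : ℤ)
      = ((∏ i : Fin n, δ i : ℕ) : ℤ) := by
    rw [hsum, hval, hfin]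
  exact_mod_cast hfinal
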